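/- arXiv:1202.6551 — 2 statements merged into one kernel-verified Lean document; each statement's English description precedes it below -/
import Mathlib

section
/- For any finite simple graph G=(V,E) and any edge uv ∈ E, H_u H_v |G⟩ = Z_{N(u)∩N(v)} |G∧uv⟩, where G∧uv = G*u*v*u is the pivot of G on uv. -/
/-- Local complementation `G*u`. -/
def localComp {V : Type*} (G : SimpleGraph V) (u : V) : SimpleGraph V where
  Adj x y := x ≠ y ∧ Xor' (G.Adj x y) (G.Adj u x ∧ G.Adj u y)
  symm := by
    constructor
    rintro x y ⟨hxy, h⟩
    refine ⟨hxy.symm, ?_⟩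
    rw [G.adj_comm y x, and_comm]
    exact h
  loopless := by constructor; rintro x ⟨h, -⟩; exact h rfl

/-- Pivoting (edge local complementation): `G∧uv = G*u*v*u`. -/
def pivot {V : Type*} (G : SimpleGraph V) (u v : V) : SimpleGraph V :=
  localComp (localComp (localComp G u) v) u

instance {V : Type*} [DecidableEq V] (G : SimpleGraph V) [DecidableRel G.Adj] (u : V) :
    DecidableRel (localComp G u).Adj :=
  fun x y => inferInstanceAs (Decidable (x ≠ y ∧ Xor (G.Adj x y) (G.Adj u x ∧ G.Adj u y)))

instance {V : Type*} [DecidableEq V] (G : SimpleGraph V) [DecidableRel G.Adj] (u v : V) :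
    DecidableRel (pivot G u v).Adj := by unfold pivot; infer_instance

noncomputable section

/-- The state space of qubits indexed by `V`: ℂ^{2^|V|}, given by amplitudes on the
computational basis states `|x⟩`, `x : V → Bool`. -/
abbrev QState (V : Type*) := (V → Bool) → ℂ

variable {V : Type*} [Fintype V] [DecidableEq V]

/-- The Pauli operator `Z_S = ∏_{u∈S} Z_u`: `Z_S |x⟩ = (-1)^{|S ∩ supp x|} |x⟩`. -/
def Zop (S : Finset V) (ψ : QState V) : QState V :=
  fun x => (-1 : ℂ) ^ (S.filter (fun u => x u = true)).card * ψ x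

/-- The Pauli operator `X_u`: flips qubit `u`. -/
def Xop (u : V) (ψ : QState V) : QState V :=
  fun x => ψ (Function.update x u (!x u))

/-- `q(x)`: the number of edges of `G` with both endpoints in the support of `x`. -/
def qVal (G : SimpleGraph V) [DecidableRel G.Adj] (x : V → Bool) : ℕ :=
  (G.edgeFinset.filter (fun e => ∀ v ∈ e, x v = true)).card

/-- The graph state `|G⟩ = 2^{-n/2} ∑_x (-1)^{q(x)} |x⟩`. -/
def graphState (G : SimpleGraph V) [DecidableRel G.Adj] : QState V :=
  fun x => (-1 : ℂ) ^ qVal G x / (Real.sqrt (2 ^ Fintype.card V) : ℂ)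

/-- The signed graph state `|G;S⟩ = Z_S |G⟩`. -/
def sgState (G : SimpleGraph V) [DecidableRel G.Adj] (S : Finset V) : QState V :=
  Zop S (graphState G)

/-- The Hadamard gate `H_u` on qubit `u`. -/
def Hop (u : V) (ψ : QState V) : QState V :=
  fun x => ((Real.sqrt 2 : ℂ))⁻¹ *
    (ψ (Function.update x u false) + (if x u then -1 else 1) * ψ (Function.update x u true))

end


section Aux

lemma localComp_adj' {V : Type*} (G : SimpleGraph V) (u x y : V) :
    (localComp G u).Adj x y ↔ x ≠ y ∧ Xor' (G.Adj x y) (G.Adj u x ∧ G.Adj u y) := Iff.rfl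

variable {V : Type*} {G : SimpleGraph V} {u v : V}

lemma pivot_adj_left (huv : G.Adj u v) (y : V) (hyu : y ≠ u) (hyv : y ≠ v) :
    (pivot G u v).Adj u y ↔ G.Adj v y := by
  have hne : u ≠ v := huv.ne
  have hvu : G.Adj v u := huv.symm
  simp only [pivot, localComp_adj', Xor', ne_eq]
  simp only [G.adj_comm y u, G.adj_comm y v, G.adj_comm v u]
  by_cases A : G.Adj u y <;> by_cases B : G.Adj v y <;>
    simp_all [G.irrefl, hyu.symm, hyv.symm, hne.symm]

lemma pivot_adj_right (huv : G.Adj u v) (y : V) (hyu : y ≠ u) (hyv : y ≠ v) :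
    (pivot G u v).Adj v y ↔ G.Adj u y := by
  have hne : u ≠ v := huv.ne
  have hvu : G.Adj v u := huv.symm
  simp only [pivot, localComp_adj', Xor', ne_eq]
  simp only [G.adj_comm y u, G.adj_comm y v, G.adj_comm v u]
  by_cases A : G.Adj u y <;> by_cases B : G.Adj v y <;>
    simp_all [G.irrefl, hyu.symm, hyv.symm, hne.symm]

lemma pivot_adj_uv (huv : G.Adj u v) : (pivot G u v).Adj u v := by
  have hne : u ≠ v := huv.ne
  have hvu : G.Adj v u := huv.symm
  simp only [pivot, localComp_adj', Xor', ne_eq]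
  simp only [G.adj_comm v u]
  simp_all [G.irrefl, hne.symm]

lemma pivot_adj_mid (huv : G.Adj u v) (p q : V) (hpu : p ≠ u) (hpv : p ≠ v)
    (hqu : q ≠ u) (hqv : q ≠ v) :
    (pivot G u v).Adj p q ↔
      (p ≠ q ∧ Xor' (G.Adj p q) (Xor' (G.Adj u p ∧ G.Adj v q) (G.Adj v p ∧ G.Adj u q))) := by
  have hne : u ≠ v := huv.ne
  have hvu : G.Adj v u := huv.symm
  simp only [pivot, localComp_adj', Xor', ne_eq]
  simp only [G.adj_comm p u, G.adj_comm p v, G.adj_comm q u, G.adj_comm q v, G.adj_comm v u]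
  by_cases E : p = q
  · simp [E]
  · by_cases A : G.Adj u p <;> by_cases B : G.Adj v p <;>
      by_cases C : G.Adj u q <;> by_cases D : G.Adj v q <;>
      simp_all [G.irrefl, hpu.symm, hpv.symm, hqu.symm, hqv.symm, hne.symm, Ne.symm E, Xor]

end Aux

section Count

variable {V : Type*} [Fintype V] [DecidableEq V]

lemma qVal_update_true (G : SimpleGraph V) [DecidableRel G.Adj] (w : V) (y : V → Bool)
    (hw : y w = false) :
    qVal G (Function.update y w true) =
      qVal G y + ((G.neighborFinset w).filter (fun p => y p = true)).card := by
  unfold qVal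
  set T := Function.update y w true with hT
  have hTw : T w = true := by simp [hT]
  have hTo : ∀ z, z ≠ w → T z = y z := fun z hz => Function.update_of_ne hz _ _
  have hneww : ∀ z, y z = true → z ≠ w := by
    intro z hz h; rw [h, hw] at hz; exact Bool.false_ne_true hz
  have key : G.edgeFinset.filter (fun e => ∀ z ∈ e, T z = true)
      = (G.edgeFinset.filter (fun e => ∀ z ∈ e, y z = true))
        ∪ ((G.neighborFinset w).filter (fun p => y p = true)).image (fun p => s(w,p)) := by
    refine Finset.ext fun e => ?_
    induction e using Sym2.ind with
    | _ a b =>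
      simp only [Finset.mem_filter, Finset.mem_union, Finset.mem_image,
        SimpleGraph.mem_edgeFinset, SimpleGraph.mem_edgeSet, Sym2.mem_iff,
        SimpleGraph.mem_neighborFinset]
      constructor
      · rintro ⟨hab, hall⟩
        by_cases haw : a = w
        · refine Or.inr ⟨b, ⟨haw ▸ hab, ?_⟩, by rw [haw]⟩
          have hbw : b ≠ w := fun h => hab.ne' (h.trans haw.symm)
          rw [← hTo b hbw]; exact hall b (Or.inr rfl)
        · by_cases hbw : b = w
          · refine Or.inr ⟨a, ⟨hbw ▸ hab.symm, ?_⟩, by rw [hbw]; exact Sym2.eq_swap⟩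
            rw [← hTo a haw]; exact hall a (Or.inl rfl)
          · refine Or.inl ⟨hab, ?_⟩
            rintro z (rfl | rfl)
            · rw [← hTo z haw]; exact hall z (Or.inl rfl)
            · rw [← hTo z hbw]; exact hall z (Or.inr rfl)
      · rintro (⟨hab, hall⟩ | ⟨p, ⟨hp, hyp⟩, heq⟩)
        · refine ⟨hab, ?_⟩
          intro z hz
          have hyz : y z = true := hall z hz
          rw [hTo z (hneww z hyz)]; exact hyz
        · rcases Sym2.eq_iff.mp heq with ⟨rfl, rfl⟩ | ⟨rfl, rfl⟩
          · refine ⟨hp, ?_⟩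
            rintro z (rfl | rfl)
            · exact hTw
            · rw [hTo _ hp.ne']; exact hyp
          · refine ⟨hp.symm, ?_⟩
            rintro z (rfl | rfl)
            · rw [hTo _ hp.ne']; exact hyp
            · exact hTw
  rw [key, Finset.card_union_of_disjoint, Finset.card_image_of_injective]
  · exact fun p q h => Sym2.congr_right.mp h
  · rw [Finset.disjoint_left]
    rintro e he hr
    rcases Finset.mem_image.mp hr with ⟨p, _, rfl⟩
    have := (Finset.mem_filter.mp he).2 w (Sym2.mem_mk_left w p)
    rw [hw] at this
    exact Bool.false_ne_true this

lemma qVal_pairs [LinearOrder V] (H : SimpleGraph V) [DecidableRel H.Adj] (y : V → Bool) :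
    qVal H y =
      (Finset.univ.filter (fun pq : V × V =>
        pq.1 < pq.2 ∧ H.Adj pq.1 pq.2 ∧ y pq.1 = true ∧ y pq.2 = true)).card := by
  unfold qVal
  refine Finset.card_bij' (fun e _ => Sym2.lift ⟨fun a b => if a ≤ b then (a,b) else (b,a), ?_⟩ e)
    (fun pq _ => s(pq.1, pq.2)) ?_ ?_ ?_ ?_
  · intro a b
    dsimp only
    rcases le_total a b with h | h
    · rcases eq_or_lt_of_le h with rfl | h'
      · simp
      · rw [if_pos h, if_neg (not_le.mpr h')]
    · rcases eq_or_lt_of_le h with rfl | h'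
      · simp
      · rw [if_pos h, if_neg (not_le.mpr h')]
  · intro e he
    induction e using Sym2.ind with
    | _ a b =>
      simp only [Finset.mem_filter, SimpleGraph.mem_edgeFinset, SimpleGraph.mem_edgeSet,
        Sym2.mem_iff] at he
      obtain ⟨hab, hall⟩ := he
      have ha := hall a (Or.inl rfl)
      have hb := hall b (Or.inr rfl)
      simp only [Sym2.lift_mk]
      rcases le_or_gt a b with h | h
      · rw [if_pos h]
        simp only [Finset.mem_filter, Finset.mem_univ, true_and]
        exact ⟨lt_of_le_of_ne h hab.ne, hab, ha, hb⟩
      · rw [if_neg (not_le.mpr h)]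
        simp only [Finset.mem_filter, Finset.mem_univ, true_and]
        exact ⟨h, hab.symm, hb, ha⟩
  · intro pq hpq
    simp only [Finset.mem_filter, Finset.mem_univ, true_and] at hpq
    obtain ⟨hlt, hadj, h1, h2⟩ := hpq
    simp only [Finset.mem_filter, SimpleGraph.mem_edgeFinset, SimpleGraph.mem_edgeSet,
      Sym2.mem_iff]
    exact ⟨hadj, by rintro z (rfl | rfl) <;> assumption⟩
  · intro e he
    induction e using Sym2.ind with
    | _ a b =>
      simp only [Sym2.lift_mk]
      rcases le_or_gt a b with h | h
      · rw [if_pos h]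
      · rw [if_neg (not_le.mpr h)]; exact Sym2.eq_swap
  · intro pq hpq
    simp only [Finset.mem_filter, Finset.mem_univ, true_and] at hpq
    simp only [Sym2.lift_mk, if_pos hpq.1.le]

lemma ite_xor (P Q : Prop) [Decidable P] [Decidable Q] :
    (if Xor P Q then (1 : ZMod 2) else 0) = (if P then 1 else 0) + (if Q then 1 else 0) := by
  by_cases hP : P <;> by_cases hQ : Q <;> simp [Xor, hP, hQ]
  decide

lemma qVal_cast_sum [LinearOrder V] (H : SimpleGraph V) [DecidableRel H.Adj] (y : V → Bool) :
    (qVal H y : ZMod 2) = ∑ p : V, ∑ q : V,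
      (if p < q ∧ H.Adj p q ∧ y p = true ∧ y q = true then 1 else 0) := by
  rw [qVal_pairs, Finset.card_filter]
  push_cast
  rw [Fintype.sum_prod_type]

end Count

section Core

variable {V : Type*} [Fintype V] [DecidableEq V]

lemma core_parity (G : SimpleGraph V) [DecidableRel G.Adj] {u v : V} (huv : G.Adj u v)
    (y : V → Bool) (hyu : y u = false) (hyv : y v = false) :
    (qVal (pivot G u v) y : ZMod 2) = (qVal G y : ZMod 2)
      + (((G.neighborFinset u).filter (fun p => y p = true)).card : ZMod 2)
        * (((G.neighborFinset v).filter (fun p => y p = true)).card : ZMod 2)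
      + (((G.neighborFinset u ∩ G.neighborFinset v).filter (fun p => y p = true)).card
          : ZMod 2) := by
  letI : LinearOrder V := LinearOrder.lift' (Fintype.equivFin V) (Fintype.equivFin V).injective
  have hne : ∀ p, y p = true → p ≠ u ∧ p ≠ v := by
    intro p hp
    constructor <;> rintro rfl
    · rw [hyu] at hp; exact Bool.false_ne_true hp
    · rw [hyv] at hp; exact Bool.false_ne_true hp
  -- notation
  set g : V → V → ZMod 2 := fun p q =>
    (if G.Adj u p ∧ y p = true then 1 else 0) * (if G.Adj v q ∧ y q = true then 1 else 0)
    with hg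
  -- step 1: pointwise decomposition
  have step1 : ∀ p q : V,
      (if p < q ∧ (pivot G u v).Adj p q ∧ y p = true ∧ y q = true then (1 : ZMod 2) else 0)
      = (if p < q ∧ G.Adj p q ∧ y p = true ∧ y q = true then 1 else 0)
        + ((if p < q then g p q else 0) + (if p < q then g q p else 0)) := by
    intro p q
    by_cases h1 : p < q
    · by_cases h2 : y p = true
      · by_cases h3 : y q = true
        · obtain ⟨hpu, hpv⟩ := hne p h2
          obtain ⟨hqu, hqv⟩ := hne q h3
          have hmid := pivot_adj_mid huv p q hpu hpv hqu hqv
          have htwo : ∀ a : ZMod 2, a + a = 0 := by decide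
          by_cases hA : G.Adj p q <;> by_cases hB : G.Adj u p <;> by_cases hC : G.Adj v q <;>
            by_cases hD : G.Adj v p <;> by_cases hE : G.Adj u q <;>
            simp [hg, h1, h2, h3, hmid, Xor', h1.ne, hA, hB, hC, hD, hE, htwo]
        · simp [h3, hg]
      · simp [h2, hg]
    · simp [h1]
  have hsum1 : (qVal (pivot G u v) y : ZMod 2)
      = (qVal G y : ZMod 2)
        + ((∑ p : V, ∑ q : V, if p < q then g p q else 0)
          + (∑ p : V, ∑ q : V, if p < q then g q p else 0)) := by
    rw [qVal_cast_sum, qVal_cast_sum]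
    rw [Finset.sum_congr rfl fun p _ => Finset.sum_congr rfl fun q _ => step1 p q]
    simp only [Finset.sum_add_distrib]
  -- swap the second double sum
  have hswap : (∑ p : V, ∑ q : V, if p < q then g q p else 0)
      = ∑ p : V, ∑ q : V, if q < p then g p q else 0 := by
    rw [Finset.sum_comm]
  -- combine into p ≠ q sum, then into full sum + diagonal
  have hcomb : ((∑ p : V, ∑ q : V, if p < q then g p q else 0)
      + (∑ p : V, ∑ q : V, if q < p then g p q else 0))
      = (∑ p : V, ∑ q : V, g p q) + (∑ p : V, g p p) := by
    rw [← Finset.sum_add_distrib]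
    have : ∀ p : V, ((∑ q : V, if p < q then g p q else 0)
        + (∑ q : V, if q < p then g p q else 0))
        = ∑ q : V, ((if p < q then g p q else 0) + (if q < p then g p q else 0)) := by
      intro p; rw [← Finset.sum_add_distrib]
    rw [Finset.sum_congr rfl fun p _ => this p]
    have key : ∀ p q : V, ((if p < q then g p q else 0) + (if q < p then g p q else 0))
        = g p q + (if q = p then g p q else 0) := by
      intro p q
      have htwo : ∀ a : ZMod 2, a + a = 0 := by decide
      rcases lt_trichotomy p q with h | h | h
      · simp [h, not_lt.mpr h.le, h.ne']
      · subst h; simp [lt_irrefl, htwo]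
      · simp [h, not_lt.mpr h.le, h.ne]
    rw [Finset.sum_congr rfl fun p _ => Finset.sum_congr rfl fun q _ => key p q]
    simp only [Finset.sum_add_distrib]
    congr 1
    refine Finset.sum_congr rfl fun p _ => ?_
    simp
  -- full sum is the product
  have hprod : (∑ p : V, ∑ q : V, g p q)
      = (((G.neighborFinset u).filter (fun p => y p = true)).card : ZMod 2)
        * (((G.neighborFinset v).filter (fun p => y p = true)).card : ZMod 2) := by
    have hu : ((G.neighborFinset u).filter (fun p => y p = true)).card
        = ∑ p : V, if G.Adj u p ∧ y p = true then 1 else 0 := by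
      rw [← Finset.card_filter]
      congr 1
      ext p
      simp [SimpleGraph.mem_neighborFinset]
    have hv : ((G.neighborFinset v).filter (fun p => y p = true)).card
        = ∑ p : V, if G.Adj v p ∧ y p = true then 1 else 0 := by
      rw [← Finset.card_filter]
      congr 1
      ext p
      simp [SimpleGraph.mem_neighborFinset]
    rw [hu, hv]
    push_cast
    rw [Finset.sum_mul_sum]
  -- diagonal is the common-neighbourhood count
  have hdiag : (∑ p : V, g p p)
      = (((G.neighborFinset u ∩ G.neighborFinset v).filter (fun p => y p = true)).card
        : ZMod 2) := by
    have hc : ((G.neighborFinset u ∩ G.neighborFinset v).filter (fun p => y p = true)).card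
        = ∑ p : V, if (G.Adj u p ∧ G.Adj v p) ∧ y p = true then 1 else 0 := by
      rw [← Finset.card_filter]
      congr 1
      ext p
      simp [SimpleGraph.mem_neighborFinset, Finset.mem_inter, and_assoc]
    rw [hc]
    push_cast
    refine Finset.sum_congr rfl fun p _ => ?_
    by_cases h1 : G.Adj u p <;> by_cases h2 : G.Adj v p <;> by_cases h3 : y p = true <;>
      simp [hg, h1, h2, h3]
  rw [hsum1, hswap, hcomb, hprod, hdiag, add_assoc]

end Core

section MainAux

lemma neg_one_pow_congr' {m n : ℕ} (h : (m : ZMod 2) = (n : ZMod 2)) :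
    ((-1 : ℂ))^m = (-1)^n := by
  have h2 : m % 2 = n % 2 := (ZMod.natCast_eq_natCast_iff _ _ _).mp h
  rcases Nat.even_or_odd m with hm | hm
  · have hn : Even n := by
      rw [Nat.even_iff] at hm ⊢; omega
    rw [hm.neg_one_pow, hn.neg_one_pow]
  · have hn : Odd n := by
      rw [Nat.odd_iff] at hm ⊢; omega
    rw [hm.neg_one_pow, hn.neg_one_pow]

lemma scalar_helper (w s a b P Q R S T : ℂ) (hw : w * w = 2) (hs : s ≠ 0) (hw0 : w ≠ 0)
    (h : P + a*Q + b*R + b*(a*S) = 2*T) :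
    w⁻¹ * (w⁻¹ * (P/s + a*(Q/s)) + b*(w⁻¹*(R/s + a*(S/s)))) = T/s := by
  have key : w⁻¹ * w⁻¹ = 2⁻¹ := by
    rw [← mul_inv, hw]
  have expand : w⁻¹ * (w⁻¹ * (P/s + a*(Q/s)) + b*(w⁻¹*(R/s + a*(S/s))))
      = (w⁻¹*w⁻¹) * ((P + a*Q + b*R + b*(a*S))/s) := by ring
  rw [expand, key, h]
  ring

end MainAux

/-- For any edge `uv` of `G`: `H_u H_v |G⟩ = Z_{N(u)∩N(v)} |G∧uv⟩`. -/
theorem hadamard_pivot_graphState {V : Type} [Fintype V] [DecidableEq V]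
    (G : SimpleGraph V) [DecidableRel G.Adj] (u v : V) (huv : G.Adj u v) :
    Hop u (Hop v (graphState G)) =
      Zop (G.neighborFinset u ∩ G.neighborFinset v) (graphState (pivot G u v)) := by
  have hne : u ≠ v := huv.ne
  have hvu : G.Adj v u := huv.symm
  funext x
  -- the base configuration
  set y : V → Bool := Function.update (Function.update x u false) v false with hy
  have hyu : y u = false := by
    rw [hy, Function.update_of_ne hne, Function.update_self]
  have hyv : y v = false := by
    rw [hy, Function.update_self]
  set y1 : V → Bool := Function.update y v true with hy1
  have hy1u : y1 u = false := by
    rw [hy1, Function.update_of_ne hne, hyu]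
  -- rewriting the updated points
  have hre : ∀ c d, Function.update (Function.update x u c) v d
      = Function.update (Function.update y v d) u c := by
    intro c d
    funext z
    by_cases hzu : z = u
    · subst hzu
      rw [Function.update_of_ne hne, Function.update_self, Function.update_self]
    · by_cases hzv : z = v
      · subst hzv
        rw [Function.update_self, Function.update_of_ne hzu, Function.update_self]
      · rw [Function.update_of_ne hzv, Function.update_of_ne hzu,
          Function.update_of_ne hzu, Function.update_of_ne hzv, hy,
          Function.update_of_ne hzv, Function.update_of_ne hzu]
  have hyv0 : Function.update y v false = y := by
    conv_lhs => rw [← hyv]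
    exact Function.update_eq_self v y
  have hyu0 : Function.update y u false = y := by
    conv_lhs => rw [← hyu]
    exact Function.update_eq_self u y
  have hX01 : Function.update y1 u false = y1 := by
    conv_lhs => rw [← hy1u]
    exact Function.update_eq_self u y1
  have hxX : x = Function.update (Function.update y v (x v)) u (x u) := by
    funext z
    by_cases hzu : z = u
    · subst hzu; rw [Function.update_self]
    · by_cases hzv : z = v
      · subst hzv; rw [Function.update_of_ne hzu, Function.update_self]
      · rw [Function.update_of_ne hzu, Function.update_of_ne hzv, hy,
          Function.update_of_ne hzv, Function.update_of_ne hzu]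
  -- the statistics
  set a0 := qVal G y with ha0
  set A := ((G.neighborFinset u).filter (fun p => y p = true)).card with hA
  set B := ((G.neighborFinset v).filter (fun p => y p = true)).card with hB
  set C := ((G.neighborFinset u ∩ G.neighborFinset v).filter (fun p => y p = true)).card with hC
  set Q := qVal (pivot G u v) y with hQ
  have hnep : ∀ p, y p = true → p ≠ u ∧ p ≠ v := by
    intro p hp
    constructor <;> rintro rfl
    · rw [hyu] at hp; exact Bool.false_ne_true hp
    · rw [hyv] at hp; exact Bool.false_ne_true hp
  -- qVal values for G
  have hq10 : qVal G (Function.update y u true) = a0 + A := qVal_update_true G u y hyu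
  have hq01 : qVal G y1 = a0 + B := qVal_update_true G v y hyv
  have hNu1 : (G.neighborFinset u).filter (fun p => y1 p = true)
      = insert v ((G.neighborFinset u).filter (fun p => y p = true)) := by
    ext p
    simp only [Finset.mem_filter, Finset.mem_insert, SimpleGraph.mem_neighborFinset, hy1]
    by_cases hpv : p = v
    · subst hpv
      simp [huv, Function.update_self]
    · rw [Function.update_of_ne hpv]
      constructor
      · rintro ⟨h1, h2⟩; exact Or.inr ⟨h1, h2⟩
      · rintro (rfl | ⟨h1, h2⟩)
        · exact absurd rfl hpv
        · exact ⟨h1, h2⟩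
  have hvnot : v ∉ (G.neighborFinset u).filter (fun p => y p = true) := by
    simp [hyv]
  have hq11 : qVal G (Function.update y1 u true) = (a0 + B) + (A + 1) := by
    rw [qVal_update_true G u y1 hy1u, hq01, hNu1, Finset.card_insert_of_notMem hvnot]
  -- qVal values for the pivot
  have hNu' : ((pivot G u v).neighborFinset u).filter (fun p => y p = true)
      = (G.neighborFinset v).filter (fun p => y p = true) := by
    ext p
    simp only [Finset.mem_filter, SimpleGraph.mem_neighborFinset]
    constructor
    · rintro ⟨h1, h2⟩
      obtain ⟨hpu, hpv⟩ := hnep p h2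
      exact ⟨(pivot_adj_left huv p hpu hpv).mp h1, h2⟩
    · rintro ⟨h1, h2⟩
      obtain ⟨hpu, hpv⟩ := hnep p h2
      exact ⟨(pivot_adj_left huv p hpu hpv).mpr h1, h2⟩
  have hNv' : ((pivot G u v).neighborFinset v).filter (fun p => y p = true)
      = (G.neighborFinset u).filter (fun p => y p = true) := by
    ext p
    simp only [Finset.mem_filter, SimpleGraph.mem_neighborFinset]
    constructor
    · rintro ⟨h1, h2⟩
      obtain ⟨hpu, hpv⟩ := hnep p h2
      exact ⟨(pivot_adj_right huv p hpu hpv).mp h1, h2⟩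
    · rintro ⟨h1, h2⟩
      obtain ⟨hpu, hpv⟩ := hnep p h2
      exact ⟨(pivot_adj_right huv p hpu hpv).mpr h1, h2⟩
  have hq'10 : qVal (pivot G u v) (Function.update y u true) = Q + B := by
    rw [qVal_update_true (pivot G u v) u y hyu, hNu']
  have hq'01 : qVal (pivot G u v) y1 = Q + A := by
    rw [qVal_update_true (pivot G u v) v y hyv, hNv']
  have hNu1' : ((pivot G u v).neighborFinset u).filter (fun p => y1 p = true)
      = insert v ((G.neighborFinset v).filter (fun p => y p = true)) := by
    ext p
    simp only [Finset.mem_filter, Finset.mem_insert, SimpleGraph.mem_neighborFinset, hy1]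
    by_cases hpv : p = v
    · subst hpv
      simp [pivot_adj_uv huv, Function.update_self]
    · rw [Function.update_of_ne hpv]
      constructor
      · rintro ⟨h1, h2⟩
        obtain ⟨hpu, _⟩ := hnep p h2
        exact Or.inr ⟨(pivot_adj_left huv p hpu hpv).mp h1, h2⟩
      · rintro (rfl | ⟨h1, h2⟩)
        · exact absurd rfl hpv
        · obtain ⟨hpu, _⟩ := hnep p h2
          exact ⟨(pivot_adj_left huv p hpu hpv).mpr h1, h2⟩
  have hvnot2 : v ∉ (G.neighborFinset v).filter (fun p => y p = true) := by
    simp [hyv]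
  have hq'11 : qVal (pivot G u v) (Function.update y1 u true) = (Q + A) + (B + 1) := by
    rw [qVal_update_true (pivot G u v) u y1 hy1u, hq'01, hNu1',
      Finset.card_insert_of_notMem hvnot2]
  -- the Z-factor count
  have hCx : ((G.neighborFinset u ∩ G.neighborFinset v).filter (fun p => x p = true)).card
      = C := by
    rw [hC]
    congr 1
    ext p
    simp only [Finset.mem_filter, Finset.mem_inter, SimpleGraph.mem_neighborFinset]
    have : ∀ (h1 : G.Adj u p) (_ : G.Adj v p), x p = y p := by
      intro h1 h2
      rw [hy, Function.update_of_ne h2.ne', Function.update_of_ne h1.ne']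
    constructor
    · rintro ⟨⟨h1, h2⟩, h3⟩
      exact ⟨⟨h1, h2⟩, by rw [← this h1 h2]; exact h3⟩
    · rintro ⟨⟨h1, h2⟩, h3⟩
      exact ⟨⟨h1, h2⟩, by rw [this h1 h2]; exact h3⟩
  -- parity relation
  have hzmod : (Q : ZMod 2) = ((a0 + A*B + C : ℕ) : ZMod 2) := by
    push_cast
    exact core_parity G huv y hyu hyv
  have hQpow : ((-1:ℂ))^Q = (-1)^(a0 + A*B + C) := neg_one_pow_congr' hzmod
  have h2C : ((-1:ℂ))^C * (-1)^C = 1 := by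
    rw [← pow_add]
    exact Even.neg_one_pow ⟨C, rfl⟩
  have hQc : ((-1:ℂ))^C * (-1)^Q = (-1)^a0 * (-1)^(A*B) := by
    rw [hQpow, pow_add, pow_add]
    linear_combination ((-1:ℂ))^a0 * (-1)^(A*B) * h2C
  -- numeric facts
  have hw : ((Real.sqrt 2 : ℝ) : ℂ) * ((Real.sqrt 2 : ℝ) : ℂ) = 2 := by
    rw [← Complex.ofReal_mul, Real.mul_self_sqrt (by norm_num)]
    norm_num
  have hw0 : ((Real.sqrt 2 : ℝ) : ℂ) ≠ 0 := by
    rw [Complex.ofReal_ne_zero]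
    positivity
  have hs : ((Real.sqrt (2 ^ Fintype.card V) : ℝ) : ℂ) ≠ 0 := by
    rw [Complex.ofReal_ne_zero]
    positivity
  -- unfold the operators
  simp only [Hop, Zop, graphState]
  have hupv : ∀ c, (Function.update x u c) v = x v :=
    fun c => Function.update_of_ne (Ne.symm hne) c x
  simp only [hupv, hre, hyv0, hyu0, ← hy1, hX01, hCx]
  -- case analysis on the two relevant bits
  have evenA : ∀ m n : ℕ, Even m → ((-1:ℂ))^(m*n) = 1 :=
    fun m n hm => Even.neg_one_pow (Nat.even_mul.mpr (Or.inl hm))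
  have evenB : ∀ m n : ℕ, Even n → ((-1:ℂ))^(m*n) = 1 :=
    fun m n hn => Even.neg_one_pow (Nat.even_mul.mpr (Or.inr hn))
  have oddAB : ∀ m n : ℕ, Odd m → Odd n → ((-1:ℂ))^(m*n) = -1 :=
    fun m n hm hn => Odd.neg_one_pow (Nat.odd_mul.mpr ⟨hm, hn⟩)
  cases hu' : x u <;> cases hv' : x v <;>
    simp only [if_true, if_false, Bool.false_eq_true]
  · -- x u = false, x v = false : x = y
    rw [hu', hv', hyv0, hyu0] at hxX
    rw [hxX, ← hQ, ← ha0, hq10, hq01, hq11,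
      show ((-1:ℂ))^C * ((-1)^Q / ((Real.sqrt (2 ^ Fintype.card V) : ℝ) : ℂ))
        = (((-1:ℂ))^C * (-1)^Q) / ((Real.sqrt (2 ^ Fintype.card V) : ℝ) : ℂ) from by ring,
      hQc]
    refine scalar_helper _ _ 1 1 _ _ _ _ _ hw hs hw0 ?_
    simp only [pow_add, pow_succ]
    rcases Nat.even_or_odd A with hA' | hA' <;> rcases Nat.even_or_odd B with hB' | hB' <;>
      first
        | (rw [hA'.neg_one_pow, hB'.neg_one_pow, evenA A B hA']; ring)
        | (rw [hA'.neg_one_pow, hB'.neg_one_pow, evenB A B hB']; ring)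
        | (rw [hA'.neg_one_pow, hB'.neg_one_pow, oddAB A B hA' hB']; ring)
  · -- x u = false, x v = true : x = y1
    rw [hu', hv', ← hy1, hX01] at hxX
    rw [hxX, hq'01, ← ha0, hq10, hq01, hq11,
      show ((-1:ℂ))^C * ((-1)^(Q + A) / ((Real.sqrt (2 ^ Fintype.card V) : ℝ) : ℂ))
        = ((((-1:ℂ))^C * (-1)^Q) * (-1)^A) / ((Real.sqrt (2 ^ Fintype.card V) : ℝ) : ℂ) from by
          rw [pow_add]; ring,
      hQc]
    refine scalar_helper _ _ (-1) 1 _ _ _ _ _ hw hs hw0 ?_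
    simp only [pow_add, pow_succ]
    rcases Nat.even_or_odd A with hA' | hA' <;> rcases Nat.even_or_odd B with hB' | hB' <;>
      first
        | (rw [hA'.neg_one_pow, hB'.neg_one_pow, evenA A B hA']; ring)
        | (rw [hA'.neg_one_pow, hB'.neg_one_pow, evenB A B hB']; ring)
        | (rw [hA'.neg_one_pow, hB'.neg_one_pow, oddAB A B hA' hB']; ring)
  · -- x u = true, x v = false : x = update y u true
    rw [hu', hv', hyv0] at hxX
    rw [hxX, hq'10, ← ha0, hq10, hq01, hq11,
      show ((-1:ℂ))^C * ((-1)^(Q + B) / ((Real.sqrt (2 ^ Fintype.card V) : ℝ) : ℂ))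
        = ((((-1:ℂ))^C * (-1)^Q) * (-1)^B) / ((Real.sqrt (2 ^ Fintype.card V) : ℝ) : ℂ) from by
          rw [pow_add]; ring,
      hQc]
    refine scalar_helper _ _ 1 (-1) _ _ _ _ _ hw hs hw0 ?_
    simp only [pow_add, pow_succ]
    rcases Nat.even_or_odd A with hA' | hA' <;> rcases Nat.even_or_odd B with hB' | hB' <;>
      first
        | (rw [hA'.neg_one_pow, hB'.neg_one_pow, evenA A B hA']; ring)
        | (rw [hA'.neg_one_pow, hB'.neg_one_pow, evenB A B hB']; ring)
        | (rw [hA'.neg_one_pow, hB'.neg_one_pow, oddAB A B hA' hB']; ring)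
  · -- x u = true, x v = true : x = update y1 u true
    rw [hu', hv', ← hy1] at hxX
    rw [hxX, hq'11, ← ha0, hq10, hq01, hq11,
      show ((-1:ℂ))^C * ((-1)^(Q + A + (B + 1)) / ((Real.sqrt (2 ^ Fintype.card V) : ℝ) : ℂ))
        = ((((-1:ℂ))^C * (-1)^Q) * ((-1)^A * (-1)^(B+1)))
            / ((Real.sqrt (2 ^ Fintype.card V) : ℝ) : ℂ) from by
          rw [pow_add, pow_add]; ring,
      hQc]
    refine scalar_helper _ _ (-1) (-1) _ _ _ _ _ hw hs hw0 ?_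
    simp only [pow_add, pow_succ]
    rcases Nat.even_or_odd A with hA' | hA' <;> rcases Nat.even_or_odd B with hB' | hB' <;>
      first
        | (rw [hA'.neg_one_pow, hB'.neg_one_pow, evenA A B hA']; ring)
        | (rw [hA'.neg_one_pow, hB'.neg_one_pow, evenB A B hB']; ring)
        | (rw [hA'.neg_one_pow, hB'.neg_one_pow, oddAB A B hA' hB']; ring)
end

section
/- Let n ≥ 2, let P_n be the path graph on vertices 1,…,n, and consider the open graph (P_n,{1},{n}) where qubits 1,…,n−1 are X-measured. For every outcome vector (r₁,…,r_{n−1}) ∈ {0,1}^{n−1} there exist a,b ∈ {0,1} and a scalar λ with |λ|=1 such that for every x ∈ {0,1}: 2^{(n−1)/2} · ⟨r₁^{(π/2)}|_1 ⋯ ⟨r_{n−1}^{(π/2)}|_{n−1} M_{(P_n,{1},{n})}|x⟩ = λ · X^a Z^b H^{n−1} |x⟩ (a state of qubit n). In particular, up to a Pauli correction, the computation simulates the Hadamard gate H when n is even and the identity when n is odd; for n=2 one has exactly √2 · ⟨r^{(π/2)}|_1 M_{(P_2,{1},{2})}|x⟩ = X^r H |x⟩. -/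
noncomputable section

variable {V : Type*} [Fintype V] [DecidableEq V]

/-- The path graph `P_n` on `Fin n` (vertices `0,…,n−1` standing for `1,…,n`). -/
def pathG (n : ℕ) : SimpleGraph (Fin n) :=
  SimpleGraph.fromRel (fun a b => (b : ℕ) = (a : ℕ) + 1)

instance (n : ℕ) : DecidableRel (pathG n).Adj :=
  fun a b => inferInstanceAs
    (Decidable (a ≠ b ∧ ((b : ℕ) = (a : ℕ) + 1 ∨ (a : ℕ) = (b : ℕ) + 1)))

/-- The entangling operator `M_{(G,I,O)}` of an open graph `(G,I,O)` applied to the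
computational basis input `|x⟩`, `x ∈ {0,1}^I`:
`M_{(G,I,O)} |x⟩ = 2^{−|I|/2} ∑_{S⊆I} (−1)^{x•1_S} |G;S⟩`
(it does not depend on the output set `O`). -/
def MGIO (G : SimpleGraph V) [DecidableRel G.Adj] (I : Finset V)
    (x : {v : V // v ∈ I} → Bool) : QState V :=
  fun z => (Real.sqrt (2 ^ I.card) : ℂ)⁻¹ *
    ∑ S ∈ I.powerset,
      (-1 : ℂ) ^ (I.attach.filter (fun u => x u = true ∧ u.1 ∈ S)).card * sgState G S z

/-- The X-measurement bra `⟨r^{(π/2)}|`: `|0^{(π/2)}⟩ = (|0⟩+|1⟩)/√2`,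
`|1^{(π/2)}⟩ = (|0⟩−|1⟩)/√2`. -/
def xVec (s : Bool) : Bool → ℂ :=
  fun b => if s && b then -(Real.sqrt 2 : ℂ)⁻¹ else (Real.sqrt 2 : ℂ)⁻¹

/-- Partial inner product of `ψ` with the product bra `⊗_{u∈M} ⟨β_u|_u`, yielding an
(unnormalized) state on the unmeasured qubits `V∖M`. -/
def contractM (M : Finset V) (β : V → Bool → ℂ) (ψ : QState V) :
    QState {v : V // v ∉ M} :=
  fun x => ∑ y : V → Bool,
    if (∀ v : {v : V // v ∉ M}, y v.1 = x v) then
      (∏ u ∈ M, starRingEnd ℂ (β u (y u))) * ψ y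
    else 0

/-- The single-qubit Pauli `X` matrix. -/
def Xm : Matrix (Fin 2) (Fin 2) ℂ := !![0, 1; 1, 0]

/-- The single-qubit Pauli `Z` matrix. -/
def Zm : Matrix (Fin 2) (Fin 2) ℂ := !![1, 0; 0, -1]

/-- The Hadamard matrix. -/
def Hmat : Matrix (Fin 2) (Fin 2) ℂ := (Real.sqrt 2 : ℂ)⁻¹ • !![1, 1; 1, -1]

/-- Index computational basis values `Bool` by `Fin 2`. -/
def b2 (b : Bool) : Fin 2 := if b then 1 else 0

end

noncomputable section AuxProof

open Matrix Finset Fin.NatCast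

/-- `!![1,1;1,-1]` = √2 • Hadamard. -/
def Km : Matrix (Fin 2) (Fin 2) ℂ := !![1,1;1,-1]

def eN (t : Bool) : ℕ := if t then 1 else 0

def b2e : Bool ≃ Fin 2 := ⟨b2, fun i => decide (i = 1), by decide, by decide⟩

lemma b2_eq : b2 = ⇑b2e := rfl

lemma sqrt2_sq : (Real.sqrt 2 : ℂ) * (Real.sqrt 2 : ℂ) = 2 := by
  rw [← Complex.ofReal_mul, Real.mul_self_sqrt (by norm_num)]
  norm_num

lemma sqrt2_ne : (Real.sqrt 2 : ℂ) ≠ 0 := by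
  rw [Complex.ofReal_ne_zero]
  positivity

lemma sqrt_two_pow (k : ℕ) : Real.sqrt (2 ^ k) = (Real.sqrt 2) ^ k := by
  induction k with
  | zero => simp
  | succ k ih => rw [pow_succ, pow_succ, Real.sqrt_mul (by positivity), ih]

lemma Km_eq : Km = (Real.sqrt 2 : ℂ) • Hmat := by
  rw [Hmat, smul_smul, mul_inv_cancel₀ sqrt2_ne, one_smul]; rfl

lemma step_mat (t a b : Bool) :
    Km * Zm ^ eN t * (Xm ^ eN a * Zm ^ eN b)
      = (if a && b then (-1:ℂ) else 1) • (Xm ^ eN (xor t b) * Zm ^ eN a * Km) := by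
  rcases t <;> rcases a <;> rcases b <;>
    · ext i j
      fin_cases i <;> fin_cases j <;>
        simp [Km, Xm, Zm, eN, pow_succ, Matrix.mul_apply, Fin.sum_univ_two] <;> ring

lemma prod_KZ : ∀ s : List Bool, ∃ (a b : Bool) (ε : ℂ), (ε = 1 ∨ ε = -1) ∧
    (s.map (fun t => Km * Zm ^ eN t)).prod = ε • (Xm ^ eN a * Zm ^ eN b * Km ^ s.length)
  | [] => ⟨false, false, 1, Or.inl rfl, by simp [eN]⟩
  | t :: s => by
      obtain ⟨a, b, ε, hε, hp⟩ := prod_KZ s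
      refine ⟨xor t b, a, (if a && b then (-1:ℂ) else 1) * ε, ?_, ?_⟩
      · rcases hε with h | h <;> rcases a <;> rcases b <;> simp [h]
      · rw [List.map_cons, List.prod_cons, hp, mul_smul_comm]
        have : Km * Zm ^ eN t * (Xm ^ eN a * Zm ^ eN b * Km ^ s.length)
            = (Km * Zm ^ eN t * (Xm ^ eN a * Zm ^ eN b)) * Km ^ s.length :=
          (mul_assoc _ _ _).symm
        rw [this, step_mat, smul_mul_assoc, smul_smul, List.length_cons]
        rw [mul_comm ε, mul_assoc (Xm ^ eN (xor t b) * Zm ^ eN a), ← pow_succ']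


lemma submatrix_list_prod (l : List (Matrix (Fin 2) (Fin 2) ℂ)) :
    (l.map (fun A => A.submatrix (⇑b2e) (⇑b2e))).prod = l.prod.submatrix (⇑b2e) (⇑b2e) := by
  induction l with
  | nil => simp [Matrix.submatrix_one_equiv]
  | cons A l ih => rw [List.map_cons, List.prod_cons, ih, List.prod_cons,
                       Matrix.submatrix_mul_equiv]

lemma transfer : ∀ (k : ℕ) (W : ℕ → Matrix Bool Bool ℂ) (x c : Bool),
    (∑ y : Fin (k+1) → Bool,
      if y 0 = x ∧ y (Fin.last k) = c then ∏ i : Fin k, W i (y i.castSucc) (y i.succ) else 0)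
    = ((List.range k).map W).prod x c := by
  intro k
  induction k with
  | zero =>
    intro W x c
    rw [← Equiv.sum_comp (Equiv.funUnique (Fin 1) Bool).symm]
    simp only [Equiv.funUnique_symm_apply]
    cases x <;> cases c <;>
      simp [Fintype.sum_bool, Matrix.one_apply, Function.const]
  | succ k ih =>
    intro W x c
    rw [← Equiv.sum_comp (Fin.consEquiv (fun _ : Fin (k+2) => Bool))]
    rw [Fintype.sum_prod_type]
    have hterm : ∀ (v : Bool) (y : Fin (k+1) → Bool),
        (if (Fin.cons v y : Fin (k+2) → Bool) 0 = x ∧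
             (Fin.cons v y : Fin (k+2) → Bool) (Fin.last (k+1)) = c then
           ∏ i : Fin (k+1), W i ((Fin.cons v y : Fin (k+2) → Bool) i.castSucc)
             ((Fin.cons v y : Fin (k+2) → Bool) i.succ) else 0)
        = (if v = x then
            (if y (Fin.last k) = c then
              W 0 v (y 0) * ∏ i : Fin k, W (i+1) (y i.castSucc) (y i.succ) else 0) else 0) := by
      intro v y
      have hlast : (Fin.cons v y : Fin (k+2) → Bool) (Fin.last (k+1)) = y (Fin.last k) := by
        rw [← Fin.succ_last, Fin.cons_succ]
      have hprod : (∏ i : Fin (k+1), W i ((Fin.cons v y : Fin (k+2) → Bool) i.castSucc)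
             ((Fin.cons v y : Fin (k+2) → Bool) i.succ))
          = W 0 v (y 0) * ∏ i : Fin k, W (i+1) (y i.castSucc) (y i.succ) := by
        rw [Fin.prod_univ_succ]
        refine congrArg₂ (· * ·) ?_ (Finset.prod_congr rfl fun i _ => ?_)
        · simp
        · rw [← Fin.succ_castSucc, Fin.cons_succ, Fin.cons_succ]
          simp [Fin.val_succ]
      rw [hprod, hlast]
      simp only [Fin.cons_zero]
      by_cases h1 : v = x <;> by_cases h2 : y (Fin.last k) = c <;> simp [h1, h2]
    calc (∑ v : Bool, ∑ y : Fin (k+1) → Bool, _) = _ := by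
          refine Finset.sum_congr rfl fun v _ => Finset.sum_congr rfl fun y _ => hterm v y
      _ = ((List.range (k+1)).map W).prod x c := by
          have pull : ∀ v : Bool, (∑ y : Fin (k+1) → Bool,
              if v = x then (if y (Fin.last k) = c then
                W 0 v (y 0) * ∏ i : Fin k, W (i+1) (y i.castSucc) (y i.succ) else 0) else 0)
              = if v = x then (∑ y : Fin (k+1) → Bool, if y (Fin.last k) = c then
                W 0 v (y 0) * ∏ i : Fin k, W (i+1) (y i.castSucc) (y i.succ) else 0) else 0 := by
            intro v; split_ifs <;> simp
          rw [Finset.sum_congr rfl fun v _ => pull v, Finset.sum_ite_eq' Finset.univ x, if_pos (Finset.mem_univ x)]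
          have expand : ∀ y : Fin (k+1) → Bool,
              (if y (Fin.last k) = c then
                W 0 x (y 0) * ∏ i : Fin k, W (i+1) (y i.castSucc) (y i.succ) else 0)
              = ∑ v' : Bool, W 0 x v' *
                (if y 0 = v' ∧ y (Fin.last k) = c then
                  ∏ i : Fin k, W (i+1) (y i.castSucc) (y i.succ) else 0) := by
            intro y
            rw [Fintype.sum_bool]
            cases hy : y 0 <;> by_cases hl : y (Fin.last k) = c <;> simp [hy, hl]
          rw [Finset.sum_congr rfl fun y _ => expand y, Finset.sum_comm]
          simp only [← Finset.mul_sum]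
          have hih : ∀ v' : Bool, (∑ y : Fin (k+1) → Bool,
              if y 0 = v' ∧ y (Fin.last k) = c then
                ∏ i : Fin k, W (i+1) (y i.castSucc) (y i.succ) else 0)
              = ((List.range k).map (W ∘ Nat.succ)).prod v' c := fun v' => ih (W ∘ Nat.succ) v' c
          rw [Finset.sum_congr rfl fun v' _ => by rw [hih v']]
          rw [List.range_succ_eq_map, List.map_cons, List.prod_cons, List.map_map,
            Matrix.mul_apply]

lemma ZK_entry (t a b : Bool) :
    (Zm ^ eN t * Km) (b2 a) (b2 b)
      = (if t && a then (-1:ℂ) else 1) * (if a && b then (-1:ℂ) else 1) := by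
  rcases t <;> rcases a <;> rcases b <;>
    simp [Zm, Km, eN, b2, Matrix.mul_apply, Fin.sum_univ_two]

lemma conj_xVec (s bb : Bool) :
    starRingEnd ℂ (xVec s bb) = (if s && bb then (-1:ℂ) else 1) * (Real.sqrt 2 : ℂ)⁻¹ := by
  rcases s <;> rcases bb <;> simp [xVec, map_inv₀, Complex.conj_ofReal]

lemma erase_last_eq_image (m : ℕ) :
    (Finset.univ.erase (Fin.last (m+1)) : Finset (Fin (m+2)))
      = Finset.image Fin.castSucc Finset.univ := by
  ext v
  simp only [Finset.mem_erase, Finset.mem_univ, and_true, Finset.mem_image, true_and]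
  constructor
  · intro h
    have hne : (v : ℕ) ≠ m + 1 := by
      intro hh
      exact h (Fin.ext (by simp [hh, Fin.val_last]))
    have hv : (v : ℕ) < m + 1 := by
      have := v.isLt
      omega
    exact ⟨⟨v, hv⟩, by ext; simp⟩
  · rintro ⟨i, rfl⟩
    intro hc
    have := congrArg Fin.val hc
    simp [Fin.val_last] at this
    have := i.isLt
    omega

lemma const_eq (m : ℕ) :
    ((Real.sqrt 2 : ℂ)⁻¹) ^ (m+1) *
        ((Real.sqrt 2 : ℂ) * ((Real.sqrt (2 ^ (m+2)) : ℝ) : ℂ)⁻¹)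
      = ((2:ℂ) ^ (m+1))⁻¹ := by
  rw [sqrt_two_pow]
  push_cast
  have hs : (Real.sqrt 2 : ℂ) * (Real.sqrt 2 : ℂ) = 2 := sqrt2_sq
  have hsne : (Real.sqrt 2 : ℂ) ≠ 0 := sqrt2_ne
  have h2 : ((2:ℂ) ^ (m+1)) = ((Real.sqrt 2 : ℂ)) ^ (m+1) * ((Real.sqrt 2 : ℂ)) ^ (m+1) := by
    rw [← mul_pow, hs]
  rw [h2]
  field_simp
  ring_nf
  rw [inv_pow]
  field_simp
  ring

lemma qVal_path (m : ℕ) (z : Fin (m+2) → Bool) :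
    ((-1:ℂ)) ^ qVal (pathG (m+2)) z
      = ∏ i : Fin (m+1), (if z i.castSucc && z i.succ then (-1:ℂ) else 1) := by
  have hcard : (Finset.univ.filter
        (fun i : Fin (m+1) => z i.castSucc && z i.succ)).card = qVal (pathG (m+2)) z := by
    rw [qVal]
    refine Finset.card_bij (fun i _ => s(i.castSucc, i.succ)) ?_ ?_ ?_
    · intro i hi
      simp only [Finset.mem_filter] at hi ⊢
      refine ⟨?_, ?_⟩
      · rw [SimpleGraph.mem_edgeFinset, SimpleGraph.mem_edgeSet]
        refine (SimpleGraph.fromRel_adj _ _ _).mpr ⟨?_, Or.inl ?_⟩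
        · intro hh
          have := congrArg Fin.val hh
          simp [Fin.val_succ] at this
        · simp [Fin.val_succ]
      · intro v hv
        rw [Sym2.mem_iff] at hv
        obtain h | h := hv <;> subst h
        · exact (Bool.and_eq_true _ _ |>.mp hi.2).1
        · exact (Bool.and_eq_true _ _ |>.mp hi.2).2
    · intro i hi j hj hij
      rw [Sym2.eq_iff] at hij
      obtain ⟨h1, _⟩ | ⟨h1, h2⟩ := hij
      · exact Fin.castSucc_injective _ h1
      · exfalso
        have e1 := congrArg Fin.val h1
        have e2 := congrArg Fin.val h2
        simp [Fin.val_succ] at e1 e2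
        omega
    · intro e he
      induction e using Sym2.ind with
      | _ u v =>
        simp only [Finset.mem_filter, SimpleGraph.mem_edgeFinset,
          SimpleGraph.mem_edgeSet] at he
        obtain ⟨hadj, hall⟩ := he
        have hadj' : u ≠ v ∧ ((v:ℕ) = (u:ℕ) + 1 ∨ (u:ℕ) = (v:ℕ) + 1) := by
          simpa [pathG, SimpleGraph.fromRel_adj] using hadj
        have hu : z u = true := hall u (by rw [Sym2.mem_iff]; left; rfl)
        have hv : z v = true := hall v (by rw [Sym2.mem_iff]; right; rfl)
        obtain h | h := hadj'.2
        · have hlt : (u:ℕ) < m + 1 := by have := v.isLt; omega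
          have e1 : ((⟨(u:ℕ), hlt⟩ : Fin (m+1)).castSucc : Fin (m+2)) = u := by ext; simp
          have e2 : ((⟨(u:ℕ), hlt⟩ : Fin (m+1)).succ : Fin (m+2)) = v := by
            ext; simp [Fin.val_succ, h]
          refine ⟨⟨(u:ℕ), hlt⟩, ?_, ?_⟩
          · simp only [Finset.mem_filter]
            exact ⟨Finset.mem_univ _, by rw [e1, e2, hu, hv]; rfl⟩
          · show s((⟨(u:ℕ), hlt⟩ : Fin (m+1)).castSucc, (⟨(u:ℕ), hlt⟩ : Fin (m+1)).succ) = s(u, v)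
            rw [e1, e2]
        · have hlt : (v:ℕ) < m + 1 := by have := u.isLt; omega
          have e1 : ((⟨(v:ℕ), hlt⟩ : Fin (m+1)).castSucc : Fin (m+2)) = v := by ext; simp
          have e2 : ((⟨(v:ℕ), hlt⟩ : Fin (m+1)).succ : Fin (m+2)) = u := by
            ext; simp [Fin.val_succ, h]
          refine ⟨⟨(v:ℕ), hlt⟩, ?_, ?_⟩
          · simp only [Finset.mem_filter]
            exact ⟨Finset.mem_univ _, by rw [e1, e2, hu, hv]; rfl⟩
          · show s((⟨(v:ℕ), hlt⟩ : Fin (m+1)).castSucc, (⟨(v:ℕ), hlt⟩ : Fin (m+1)).succ) = s(u, v)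
            rw [e1, e2, Sym2.eq_swap]
  rw [← hcard, Finset.prod_ite, Finset.prod_const, Finset.prod_const, one_pow, mul_one]

lemma MGIO_path (m : ℕ) (x : Bool) (z : Fin (m+2) → Bool) :
    MGIO (pathG (m+2)) {(0 : Fin (m+2))} (fun _ => x) z
      = (if z 0 = x then 1 else 0) * ((-1:ℂ) ^ qVal (pathG (m+2)) z)
          * (Real.sqrt 2 : ℂ) * ((Real.sqrt (2 ^ (m+2)) : ℝ) : ℂ)⁻¹ := by
  rw [MGIO]
  have hps : ({(0 : Fin (m+2))} : Finset _).powerset = {∅, {0}} := by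
    ext S
    simp [Finset.mem_powerset, Finset.subset_singleton_iff]
  rw [hps, Finset.sum_insert
    (by intro h; exact Finset.singleton_ne_empty _ ((Finset.mem_singleton.mp h).symm)),
    Finset.sum_singleton]
  have hR : ((Real.sqrt (2 ^ (m+2)) : ℝ) : ℂ) ≠ 0 := by
    rw [Complex.ofReal_ne_zero]
    positivity
  have hcard : Fintype.card (Fin (m+2)) = m + 2 := Fintype.card_fin _
  have hs1 : ∀ S : Finset (Fin (m+2)),
      sgState (pathG (m+2)) S z
        = (-1:ℂ) ^ (S.filter (fun u => z u = true)).card *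
            ((-1:ℂ) ^ qVal (pathG (m+2)) z / ((Real.sqrt (2 ^ (m+2)) : ℝ) : ℂ)) := by
    intro S
    rw [sgState, Zop, graphState, hcard]
  have hfe : (({(0:Fin (m+2))} : Finset _).attach.filter
      (fun u => (fun _ => x) u = true ∧ u.1 ∈ (∅ : Finset (Fin (m+2))))).card = 0 := by
    simp
  have hff : (({(0:Fin (m+2))} : Finset _).attach.filter
      (fun u => (fun _ => x) u = true ∧ u.1 ∈ ({0} : Finset (Fin (m+2))))).card
      = if x then 1 else 0 := by
    rcases x with _ | _
    · simp
    · have hall : ∀ u ∈ ({(0:Fin (m+2))} : Finset _).attach,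
          (fun _ => true) u = true ∧ u.1 ∈ ({0} : Finset (Fin (m+2))) := fun u _ => ⟨rfl, u.2⟩
      rw [Finset.filter_true_of_mem hall, Finset.card_attach, Finset.card_singleton]
      rfl
  have hze : ((∅ : Finset (Fin (m+2))).filter (fun u => z u = true)).card = 0 := by simp
  have hzf : (({0} : Finset (Fin (m+2))).filter (fun u => z u = true)).card
      = if z 0 then 1 else 0 := by
    rcases hz : z 0 with _ | _
    · rw [Finset.filter_false_of_mem, Finset.card_empty]
      · simp [hz]
      · intro u hu
        rw [Finset.mem_singleton.mp hu, hz]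
        simp
    · rw [Finset.filter_true_of_mem, Finset.card_singleton]
      · simp [hz]
      · intro u hu
        rw [Finset.mem_singleton.mp hu]
        exact hz
  rw [hs1, hs1, hfe, hff, hze, hzf, Finset.card_singleton]
  have hs2 : ((Real.sqrt 2 : ℂ)) ^ 2 = (2:ℂ) := by rw [sq]; exact sqrt2_sq
  rcases x with _ | _ <;> rcases hz : z 0 with _ | _ <;>
    simp only [hz, pow_one, pow_zero, if_true, if_false, Bool.false_eq_true] <;>
    field_simp <;>
    simp only [hs2, Bool.true_eq_false, if_false, mul_zero, sub_zero] <;>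
    ring

lemma main_calc (m : ℕ) (M : Finset (Fin (m+2)))
    (hM : M = Finset.univ.erase (Fin.last (m+1))) (hlM : Fin.last (m+1) ∉ M)
    (r : Fin (m+2) → Bool) (x : Bool) (y : {v : Fin (m+2) // v ∉ M} → Bool) :
    contractM M (fun u => xVec (r u)) (MGIO (pathG (m+2)) {0} (fun _ => x)) y
      = ((2:ℂ) ^ (m+1))⁻¹ *
        ((List.range (m+1)).map (fun i => Zm ^ eN (r ((i : ℕ) : Fin (m+2))) * Km)).prod
          (b2 x) (b2 (y ⟨Fin.last (m+1), hlM⟩)) := by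
  subst hM
  set c := y ⟨Fin.last (m+1), hlM⟩ with hc
  set W : ℕ → Matrix Bool Bool ℂ := fun i => Matrix.of fun a b : Bool =>
    (if r ((i : ℕ) : Fin (m+2)) && a then (-1:ℂ) else 1) *
      (if a && b then (-1:ℂ) else 1) with hW
  have hcast : ∀ i : Fin (m+1), (((i : ℕ) : Fin (m+2))) = i.castSucc := by
    intro i
    ext
    rw [Fin.val_natCast]
    have := i.isLt
    simp [Fin.coe_castSucc]
  have key : ∀ z : Fin (m+2) → Bool,
      (if (∀ v : {v : Fin (m+2) // v ∉ Finset.univ.erase (Fin.last (m+1))}, z v.1 = y v) then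
        (∏ u ∈ Finset.univ.erase (Fin.last (m+1)), starRingEnd ℂ (xVec (r u) (z u))) *
          MGIO (pathG (m+2)) {0} (fun _ => x) z else 0)
      = ((2:ℂ)^(m+1))⁻¹ *
        (if z 0 = x ∧ z (Fin.last (m+1)) = c then
          ∏ i : Fin (m+1), W i (z i.castSucc) (z i.succ) else 0) := by
    intro z
    have hiff : (∀ v : {v : Fin (m+2) // v ∉ Finset.univ.erase (Fin.last (m+1))}, z v.1 = y v)
        ↔ z (Fin.last (m+1)) = c := by
      constructor
      · intro h
        exact h ⟨Fin.last (m+1), hlM⟩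
      · intro h v
        obtain ⟨v, hv⟩ := v
        have hvl : v = Fin.last (m+1) := by
          by_contra hne
          exact hv (Finset.mem_erase.mpr ⟨hne, Finset.mem_univ _⟩)
        subst hvl
        exact h
    rw [if_congr hiff rfl rfl]
    by_cases hzl : z (Fin.last (m+1)) = c
    · by_cases hz0 : z 0 = x
      · rw [if_pos hzl, if_pos ⟨hz0, hzl⟩]
        rw [MGIO_path, if_pos hz0, qVal_path]
        rw [Finset.prod_congr rfl (fun u _ => conj_xVec (r u) (z u)),
          Finset.prod_mul_distrib, Finset.prod_const,
          Finset.card_erase_of_mem (Finset.mem_univ _), Finset.card_univ, Fintype.card_fin]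
        rw [erase_last_eq_image,
          Finset.prod_image (fun a _ b _ h => Fin.castSucc_injective _ h)]
        simp only [hW, Matrix.of_apply, hcast]
        rw [Finset.prod_mul_distrib]
        have hcc : m + 2 - 1 = m + 1 := rfl
        rw [hcc, ← const_eq m]
        ring
      · rw [if_pos hzl, if_neg (fun hh => hz0 hh.1), MGIO_path, if_neg hz0]
        ring
    · rw [if_neg hzl, if_neg (fun hh => hzl hh.2), mul_zero]
  rw [contractM, Finset.sum_congr rfl (fun z _ => key z), ← Finset.mul_sum]
  rw [transfer (m+1) W x c]
  congr 1
  have hWs : W = (fun A : Matrix (Fin 2) (Fin 2) ℂ => A.submatrix (⇑b2e) (⇑b2e)) ∘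
      (fun j : ℕ => Zm ^ eN (r ((j : ℕ) : Fin (m+2))) * Km) := by
    funext i
    ext a b
    simp only [hW, Matrix.of_apply, Function.comp_apply, Matrix.submatrix_apply]
    exact (ZK_entry (r ((i : ℕ) : Fin (m+2))) a b).symm
  rw [hWs, ← List.map_map, submatrix_list_prod]
  rfl

lemma KmT : Km.transpose = Km := by
  ext i j
  fin_cases i <;> fin_cases j <;> simp [Km]

lemma ZmT : Zm.transpose = Zm := by
  ext i j
  fin_cases i <;> fin_cases j <;> simp [Zm]

lemma sc2 : (Real.sqrt 2 : ℂ) * (2:ℂ)⁻¹ = ((Real.sqrt 2 : ℂ))⁻¹ := by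
  field_simp
  rw [sq]; exact sqrt2_sq

lemma hsc (m : ℕ) :
    ((Real.sqrt (2 ^ (m+1)) : ℝ) : ℂ) * ((Real.sqrt 2 : ℂ)) ^ (m+1) = (2:ℂ) ^ (m+1) := by
  rw [sqrt_two_pow]
  push_cast
  rw [← mul_pow, sqrt2_sq]

end AuxProof

open Fin.NatCast in
/-- X-measuring the qubits `1,…,n−1` of the open graph `(P_n,{1},{n})` simulates, up to a
Pauli correction `X^a Z^b` and a phase, the unitary `H^{n−1}` (i.e. the Hadamard gate `H`
when `n` is even and the identity when `n` is odd): for every outcome vector `r` there are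
`a, b ∈ {0,1}` and `λ` with `|λ| = 1` such that for every input `x ∈ {0,1}`,
`2^{(n−1)/2} ⟨r₁^{(π/2)}|₁ ⋯ ⟨r_{n−1}^{(π/2)}|_{n−1} M_{(P_n,{1},{n})}|x⟩
  = λ · X^a Z^b H^{n−1} |x⟩` as a state of qubit `n`. Moreover for `n = 2` one has exactly
`√2 ⟨r^{(π/2)}|₁ M_{(P₂,{1},{2})}|x⟩ = X^r H |x⟩`. -/
theorem path_open_graph_simulates_hadamard (n : ℕ) (hn : 2 ≤ n)
    (first last : Fin n) (hfirst : (first : ℕ) = 0) (hlast : (last : ℕ) = n - 1)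
    (M : Finset (Fin n)) (hM : M = Finset.univ.erase last) (hlM : last ∉ M) :
    (∀ r : Fin n → Bool, ∃ (a b : Bool) (lam : ℂ), ‖lam‖ = 1 ∧
      ∀ x : Bool,
        (Real.sqrt (2 ^ (n - 1)) : ℂ) •
            contractM M (fun u => xVec (r u)) (MGIO (pathG n) {first} (fun _ => x)) =
          fun y : {v : Fin n // v ∉ M} → Bool =>
            lam * ((Xm ^ (if a then 1 else 0) * Zm ^ (if b then 1 else 0) * Hmat ^ (n - 1))
              (b2 (y ⟨last, hlM⟩)) (b2 x))) ∧
    (n = 2 → ∀ (r : Fin n → Bool) (x : Bool),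
      (Real.sqrt 2 : ℂ) •
          contractM M (fun u => xVec (r u)) (MGIO (pathG n) {first} (fun _ => x)) =
        fun y : {v : Fin n // v ∉ M} → Bool =>
          (Xm ^ (if r first then 1 else 0) * Hmat) (b2 (y ⟨last, hlM⟩)) (b2 x)) := by

  obtain ⟨m, rfl⟩ : ∃ m, n = m + 2 := ⟨n - 2, by omega⟩
  have hf : first = 0 := Fin.ext (by simpa using hfirst)
  have hl : last = Fin.last (m+1) := Fin.ext hlast
  subst hM hf hl
  constructor
  · intro r
    obtain ⟨a, b, ε, hε, hprod⟩ :=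
      prod_KZ (((List.range (m+1)).map (fun i => r ((i:ℕ) : Fin (m+2)))).reverse)
    refine ⟨a, b, ε, by rcases hε with h | h <;> simp [h], ?_⟩
    intro x
    funext y
    rw [Pi.smul_apply, smul_eq_mul, main_calc m _ rfl hlM r x y]
    set c := y ⟨Fin.last (m+1), hlM⟩ with hc
    set L : List (Matrix (Fin 2) (Fin 2) ℂ) :=
      (List.range (m+1)).map (fun i => Zm ^ eN (r ((i:ℕ) : Fin (m+2))) * Km) with hL
    have hT : L.prod (b2 x) (b2 c) = (Matrix.transpose L.prod) (b2 c) (b2 x) := rfl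
    have hT2 : Matrix.transpose L.prod
        = ((((List.range (m+1)).map (fun i => r ((i:ℕ) : Fin (m+2)))).reverse).map
            (fun t => Km * Zm ^ eN t)).prod := by
      rw [Matrix.transpose_list_prod, hL, List.map_map]
      have hco : (Matrix.transpose ∘ fun i : ℕ => Zm ^ eN (r ((i:ℕ) : Fin (m+2))) * Km)
          = (fun t => Km * Zm ^ eN t) ∘ (fun i : ℕ => r ((i:ℕ) : Fin (m+2))) := by
        funext i
        simp only [Function.comp_apply, Matrix.transpose_mul, Matrix.transpose_pow, KmT, ZmT]
      rw [hco, ← List.map_map, List.map_reverse]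
    have hlen : ((((List.range (m+1)).map (fun i => r ((i:ℕ) : Fin (m+2)))).reverse)).length
        = m + 1 := by simp
    rw [hT, hT2, hprod, hlen]
    have hKH : (Xm ^ eN a * Zm ^ eN b * Km ^ (m+1))
        = ((Real.sqrt 2 : ℂ))^(m+1) • (Xm ^ eN a * Zm ^ eN b * Hmat ^ (m+1)) := by
      rw [Km_eq, smul_pow, Matrix.mul_smul]
    rw [hKH]
    have hs := hsc m
    have hSne : ((Real.sqrt (2^(m+1)) : ℝ) : ℂ) ≠ 0 := by
      rw [Complex.ofReal_ne_zero]
      positivity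
    have hTne : ((Real.sqrt 2 : ℂ))^(m+1) ≠ 0 := pow_ne_zero _ sqrt2_ne
    simp only [Matrix.smul_apply, smul_eq_mul, eN, show m+2-1 = m+1 from rfl]
    rw [← hs]
    field_simp
  · intro h2 r x
    obtain rfl : m = 0 := by omega
    funext y
    rw [Pi.smul_apply, smul_eq_mul, main_calc 0 _ rfl hlM r x y]
    set c := y ⟨Fin.last 1, hlM⟩ with hc
    have hlist : ((List.range 1).map (fun i => Zm ^ eN (r ((i:ℕ) : Fin 2)) * Km)).prod
        = Zm ^ eN (r 0) * Km := by
      simp [List.range_succ]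
    rw [hlist, ZK_entry]
    have hself : ∀ (t xx cc : Bool),
        (Real.sqrt 2 : ℂ) * (((2:ℂ)^(0+1))⁻¹ *
            ((if t && xx then (-1:ℂ) else 1) * (if xx && cc then (-1:ℂ) else 1)))
          = (Xm ^ (if t then 1 else 0) * Hmat) (b2 cc) (b2 xx) := by
      intro t xx cc
      rcases t <;> rcases xx <;> rcases cc <;>
        · simp [Xm, Hmat, b2, Matrix.mul_apply, Fin.sum_univ_two, Matrix.one_apply]
          field_simp
          first
          | linear_combination sqrt2_sq
          | linear_combination -sqrt2_sq
          | ring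
    exact hself (r 0) x c
end
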